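/- Let p ∈ ℂ with Im p > 0, and define h_p(z) = −log| (Complex.log z − Complex.log p) / (Complex.log z − Complex.log (conj p)) | for z in the upper half plane {Im z > 0} with z ≠ p. Then: (1) h_p is harmonic on {z : Im z > 0} ∖ {p}; and (2) h_p(z) > 0 for every z with Im z > 0 and z ≠ p; equivalently, |Complex.log z − Complex.log p| < |Complex.log z − Complex.log (conj p)| for all such z. -/

import Mathlib

noncomputable section

open Complex

/-- The Laplacian of a real-valued function on `ℂ ≅ ℝ²`, computed in the real
coordinates `(Re z, Im z)`. -/
def laplacian (u : ℂ → ℝ) (w : ℂ) : ℝ :=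
  fderiv ℝ (fun z => fderiv ℝ u z 1) w 1 +
    fderiv ℝ (fun z => fderiv ℝ u z Complex.I) w Complex.I

/-- The Green's-type function
`h_p(z) = −log|(log z − log p)/(log z − log conj p)|`. -/
def greenH (p : ℂ) (z : ℂ) : ℝ :=
  -Real.log ‖
    ((Complex.log z - Complex.log p) / (Complex.log z - Complex.log ((starRingEnd ℂ) p)))‖

lemma fderiv_re_comp {f : ℂ → ℂ} {z : ℂ} (hf : DifferentiableAt ℂ f z) (v : ℂ) :
    fderiv ℝ (fun w => (f w).re) z v = (deriv f z * v).re := by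
  have h1 : (fun w => (f w).re) = Complex.reCLM ∘ f := rfl
  rw [h1, fderiv_comp (x := z) Complex.reCLM.differentiableAt (hf.restrictScalars ℝ)]
  have h2 : fderiv ℝ f z = (fderiv ℂ f z).restrictScalars ℝ := hf.fderiv_restrictScalars ℝ
  have h3 : fderiv ℂ f z v = deriv f z * v := by
    have : v = v • (1 : ℂ) := by simp
    rw [this, map_smul, fderiv_apply_one_eq_deriv]
    simp [mul_comm]
  simp [ContinuousLinearMap.fderiv, h2, h3]

lemma harmonic_re {f : ℂ → ℂ} {V : Set ℂ} (hV : IsOpen V) (hf : DifferentiableOn ℂ f V)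
    {u : ℂ → ℝ} (hu : ∀ z ∈ V, u z = (f z).re) {z₀ : ℂ} (hz₀ : z₀ ∈ V) :
    ContDiffAt ℝ 2 u z₀ ∧ laplacian u z₀ = 0 := by
  have hana : ∀ z ∈ V, AnalyticAt ℂ f z := fun z hz => hf.analyticAt (hV.mem_nhds hz)
  -- differentiability of `deriv f` on V
  have hderiv : ∀ z ∈ V, DifferentiableAt ℂ (deriv f) z := by
    intro z hz
    have h1 : DifferentiableAt ℂ (fderiv ℂ f) z := ((hana z hz).fderiv).differentiableAt
    have h2 : deriv f = fun w => (ContinuousLinearMap.apply ℂ ℂ (1 : ℂ)) (fderiv ℂ f w) := by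
      funext w; simp [fderiv_apply_one_eq_deriv]
    rw [h2]
    exact ((ContinuousLinearMap.apply ℂ ℂ (1 : ℂ)).differentiableAt).comp z h1
  have huf : ∀ z ∈ V, fderiv ℝ u z = fderiv ℝ (fun w => (f w).re) z := by
    intro z hz
    apply Filter.EventuallyEq.fderiv_eq
    filter_upwards [hV.mem_nhds hz] with w hw
    exact hu w hw
  constructor
  · -- ContDiffAt
    have h1 : ContDiffAt ℝ 2 (fun w => (f w).re) z₀ := by
      have : ContDiffAt ℝ 2 f z₀ := ((hana z₀ hz₀).restrictScalars).contDiffAt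
      exact Complex.reCLM.contDiff.contDiffAt.comp z₀ this
    apply h1.congr_of_eventuallyEq
    filter_upwards [hV.mem_nhds hz₀] with w hw
    exact hu w hw
  · -- Laplacian
    have e1 : (fun z => fderiv ℝ u z 1) =ᶠ[nhds z₀] (fun z => (deriv f z * 1).re) := by
      filter_upwards [hV.mem_nhds hz₀] with z hz
      rw [huf z hz, fderiv_re_comp ((hf z hz).differentiableAt (hV.mem_nhds hz))]
    have e2 : (fun z => fderiv ℝ u z Complex.I) =ᶠ[nhds z₀]
        (fun z => (deriv f z * Complex.I).re) := by
      filter_upwards [hV.mem_nhds hz₀] with z hz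
      rw [huf z hz, fderiv_re_comp ((hf z hz).differentiableAt (hV.mem_nhds hz))]
    have d2 := hderiv z₀ hz₀
    unfold laplacian
    rw [e1.fderiv_eq, e2.fderiv_eq]
    have t1 : fderiv ℝ (fun z => (deriv f z * 1).re) z₀ 1
        = (deriv (fun z => deriv f z * 1) z₀ * 1).re :=
      fderiv_re_comp (by simpa using d2) 1
    have t2 : fderiv ℝ (fun z => (deriv f z * Complex.I).re) z₀ Complex.I
        = (deriv (fun z => deriv f z * Complex.I) z₀ * Complex.I).re :=
      fderiv_re_comp (d2.mul_const Complex.I) Complex.I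
    rw [t1, t2, deriv_mul_const d2, deriv_mul_const d2]
    have : deriv (deriv f) z₀ * 1 * 1 + deriv (deriv f) z₀ * Complex.I * Complex.I = 0 := by
      have := Complex.I_mul_I
      ring_nf
      rw [Complex.I_sq]
      ring
    calc (deriv (fun z => deriv f z) z₀ * 1 * 1).re
          + (deriv (fun z => deriv f z) z₀ * Complex.I * Complex.I).re
        = (deriv (deriv f) z₀ * 1 * 1 + deriv (deriv f) z₀ * Complex.I * Complex.I).re := by
          simp [Complex.add_re]
      _ = 0 := by rw [this]; simp

lemma harmonic_log_abs {g : ℂ → ℂ} {V : Set ℂ} (hV : IsOpen V) (hg : DifferentiableOn ℂ g V)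
    (hg0 : ∀ z ∈ V, g z ≠ 0) {u : ℂ → ℝ}
    (hu : ∀ z ∈ V, u z = Real.log ‖g z‖) {z₀ : ℂ} (hz₀ : z₀ ∈ V) :
    ContDiffAt ℝ 2 u z₀ ∧ laplacian u z₀ = 0 := by
  set c := g z₀ with hc
  have hcne : c ≠ 0 := hg0 z₀ hz₀
  set W : Set ℂ := V ∩ (fun z => g z / c) ⁻¹' Complex.slitPlane with hW
  have hWopen : IsOpen W :=
    ContinuousOn.isOpen_inter_preimage ((hg.continuousOn).div_const c) hV
      Complex.isOpen_slitPlane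
  have hz₀W : z₀ ∈ W := by
    refine ⟨hz₀, ?_⟩
    simp only [Set.mem_preimage, ← hc, div_self hcne]
    exact Complex.one_mem_slitPlane
  have hWV : W ⊆ V := Set.inter_subset_left
  set f : ℂ → ℂ := fun z => Complex.log (g z / c) + Complex.log c with hf
  have hfd : DifferentiableOn ℂ f W := by
    intro z hz
    have h1 : DifferentiableAt ℂ (fun z => g z / c) z :=
      ((hg z (hWV hz)).differentiableAt (hV.mem_nhds (hWV hz))).div_const c
    have h2 : DifferentiableAt ℂ Complex.log (g z / c) :=
      Complex.differentiableAt_log hz.2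
    exact ((h2.comp z h1).add_const _).differentiableWithinAt
  have hu' : ∀ z ∈ W, u z = (f z).re := by
    intro z hz
    have hgz : g z ≠ 0 := hg0 z (hWV hz)
    rw [hu z (hWV hz), hf]
    simp only [Complex.add_re, Complex.log_re, norm_div]
    rw [Real.log_div (by simpa using hgz) (by simpa using hcne)]
    ring
  exact harmonic_re hWopen hfd hu' hz₀W

lemma arg_pos_of_im_pos {z : ℂ} (h : 0 < z.im) : 0 < z.arg := by
  rcases lt_or_eq_of_le (Complex.arg_nonneg_iff.2 h.le) with h1 | h1
  · exact h1
  · exfalso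
    have := Complex.arg_eq_zero_iff.1 h1.symm
    exact h.ne' this.2

lemma abs_sub_lt_abs_sub_conj {a b : ℂ} (ha : 0 < a.im) (hb : 0 < b.im) :
    ‖a - b‖ < ‖a - (starRingEnd ℂ) b‖ := by
  apply lt_of_pow_lt_pow_left₀ 2 (norm_nonneg _)
  rw [Complex.sq_norm, Complex.sq_norm, Complex.normSq_apply, Complex.normSq_apply]
  simp only [Complex.sub_re, Complex.sub_im, Complex.conj_re, Complex.conj_im]
  nlinarith [sq_nonneg (a.im - b.im), sq_nonneg (a.im + b.im)]

/-- For `p` in the upper half plane, `h_p` is harmonic on the punctured upper half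
plane and positive there; equivalently `|log z − log p| < |log z − log (conj p)|`. -/
theorem greenH_harmonic_pos (p : ℂ) (hp : 0 < p.im) :
    (ContDiffOn ℝ 2 (greenH p) ({z : ℂ | 0 < z.im} \ {p}) ∧
      ∀ z ∈ {z : ℂ | 0 < z.im} \ {p}, laplacian (greenH p) z = 0) ∧
    ∀ z : ℂ, 0 < z.im → z ≠ p →
      0 < greenH p z ∧
      ‖Complex.log z - Complex.log p‖ <
        ‖Complex.log z - Complex.log ((starRingEnd ℂ) p)‖ := by
  have hpne : p ≠ 0 := fun h => by simp [h] at hp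
  have hargp : p.arg ≠ Real.pi := by
    intro h
    exact hp.ne' (Complex.arg_eq_pi_iff.1 h).2
  have hlogconj : Complex.log ((starRingEnd ℂ) p) = (starRingEnd ℂ) (Complex.log p) :=
    Complex.log_conj p hargp
  have hlogp_im : 0 < (Complex.log p).im := by
    rw [Complex.log_im]; exact arg_pos_of_im_pos hp
  -- basic facts for z in the upper half plane
  have key : ∀ z : ℂ, 0 < z.im →
      (Complex.log z).im > 0 ∧
      Complex.log z - Complex.log ((starRingEnd ℂ) p) ≠ 0 := by
    intro z hz
    have h1 : 0 < (Complex.log z).im := by rw [Complex.log_im]; exact arg_pos_of_im_pos hz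
    refine ⟨h1, ?_⟩
    intro h
    have : (Complex.log z - Complex.log ((starRingEnd ℂ) p)).im = 0 := by rw [h]; rfl
    rw [Complex.sub_im, hlogconj, Complex.conj_im] at this
    linarith
  have numne : ∀ z : ℂ, 0 < z.im → z ≠ p → Complex.log z - Complex.log p ≠ 0 := by
    intro z hz hzp h
    have hzne : z ≠ 0 := fun h0 => by simp [h0] at hz
    have : Complex.log z = Complex.log p := by linear_combination h
    have : z = p := by
      rw [← Complex.exp_log hzne, this, Complex.exp_log hpne]
    exact hzp this
  -- the strict inequality
  have ineq : ∀ z : ℂ, 0 < z.im →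
      ‖Complex.log z - Complex.log p‖ <
        ‖Complex.log z - Complex.log ((starRingEnd ℂ) p)‖ := by
    intro z hz
    rw [hlogconj]
    exact abs_sub_lt_abs_sub_conj (key z hz).1 hlogp_im
  set S : Set ℂ := {z : ℂ | 0 < z.im} \ {p} with hS
  have hSopen : IsOpen S :=
    (isOpen_lt continuous_const Complex.continuous_im).sdiff isClosed_singleton
  -- greenH as log abs of a nonvanishing holomorphic function on S
  set g : ℂ → ℂ := fun z =>
    (Complex.log z - Complex.log ((starRingEnd ℂ) p)) / (Complex.log z - Complex.log p)
    with hg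
  have hmemS : ∀ z ∈ S, 0 < z.im ∧ z ≠ p := by
    intro z hz
    exact ⟨hz.1, fun h => hz.2 (by simp [h])⟩
  have hgd : DifferentiableOn ℂ g S := by
    intro z hz
    obtain ⟨hzim, hzp⟩ := hmemS z hz
    have hslit : z ∈ Complex.slitPlane := Complex.mem_slitPlane_iff.2 (Or.inr hzim.ne')
    have hld : DifferentiableAt ℂ Complex.log z := Complex.differentiableAt_log hslit
    exact (((hld.sub_const _).div (hld.sub_const _)
      (numne z hzim hzp))).differentiableWithinAt
  have hg0 : ∀ z ∈ S, g z ≠ 0 := by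
    intro z hz
    obtain ⟨hzim, hzp⟩ := hmemS z hz
    exact div_ne_zero (key z hzim).2 (numne z hzim hzp)
  have hgu : ∀ z ∈ S, greenH p z = Real.log ‖g z‖ := by
    intro z hz
    obtain ⟨hzim, hzp⟩ := hmemS z hz
    have h1 : ‖Complex.log z - Complex.log p‖ ≠ 0 :=
      norm_ne_zero_iff.mpr (numne z hzim hzp)
    have h2 : ‖Complex.log z - Complex.log ((starRingEnd ℂ) p)‖ ≠ 0 :=
      norm_ne_zero_iff.mpr (key z hzim).2
    rw [greenH, hg]
    simp only [norm_div]
    rw [Real.log_div h1 h2, Real.log_div h2 h1]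
    ring
  refine ⟨⟨?_, ?_⟩, ?_⟩
  · intro z hz
    exact ((harmonic_log_abs hSopen hgd hg0 hgu hz).1).contDiffWithinAt
  · intro z hz
    exact (harmonic_log_abs hSopen hgd hg0 hgu hz).2
  · intro z hzim hzp
    refine ⟨?_, ineq z hzim⟩
    rw [greenH]
    have h1 : 0 < ‖Complex.log z - Complex.log p‖ :=
      norm_pos_iff.mpr (numne z hzim hzp)
    have h2 : 0 < ‖Complex.log z - Complex.log ((starRingEnd ℂ) p)‖ :=
      norm_pos_iff.mpr (key z hzim).2
    have hlt : ‖(Complex.log z - Complex.log p) /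
        (Complex.log z - Complex.log ((starRingEnd ℂ) p))‖ < 1 := by
      rw [norm_div, div_lt_one h2]
      exact ineq z hzim
    have hpos : 0 < ‖(Complex.log z - Complex.log p) /
        (Complex.log z - Complex.log ((starRingEnd ℂ) p))‖ := by
      rw [norm_div]; positivity
    linarith [Real.log_neg hpos hlt]
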